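/- Let 0 < α < 1 and α ≠ 1/2, and let L_α be Salem's singular function. Then L_α is differentiable with derivative zero at Lebesgue-almost every point of [0,1]. -/

import Mathlib

open MeasureTheory

namespace SalemAux

/-- Increment of `L` over the `k`-th dyadic interval of level `n`. -/
noncomputable def dl (L : ℝ → ℝ) (n k : ℕ) : ℝ :=
  L (((k : ℝ) + 1) / 2 ^ n) - L ((k : ℝ) / 2 ^ n)

/-- Child relation for dyadic increments. -/
theorem child {α : ℝ} {L : ℝ → ℝ}
    (hA : ∀ (n j : ℕ), j ≤ 2 ^ n → L ((j : ℝ) / 2 ^ (n + 1)) = α * L ((j : ℝ) / 2 ^ n))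
    (hB : ∀ (n m : ℕ), m ≤ 2 ^ n →
      L (((2 : ℝ) ^ n + (m : ℝ)) / 2 ^ (n + 1)) = (1 - α) * L ((m : ℝ) / 2 ^ n) + α) :
    ∀ n k, k < 2 ^ n →
      dl L (n + 1) (2 * k) = α * dl L n k ∧ dl L (n + 1) (2 * k + 1) = (1 - α) * dl L n k := by
  -- scaled relations
  have sA : ∀ (n j : ℕ), j < 2 ^ n → dl L (n + 1) j = α * dl L n j := by
    intro n j hj
    have h1 := hA n j hj.le
    have h2 := hA n (j + 1) hj
    simp only [dl]
    push_cast at h1 h2 ⊢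
    rw [h1, h2]; ring
  have sB : ∀ (n m : ℕ), m < 2 ^ n → dl L (n + 1) (2 ^ n + m) = (1 - α) * dl L n m := by
    intro n m hm
    have h1 := hB n m hm.le
    have h2 := hB n (m + 1) hm
    simp only [dl]
    push_cast at h1 h2 ⊢
    rw [show ((2:ℝ) ^ n + (m:ℝ)) + 1 = (2:ℝ) ^ n + ((m:ℝ) + 1) by ring] at *
    rw [h1, h2]; ring
  intro n
  induction n with
  | zero =>
    intro k hk
    interval_cases k
    constructor
    · simpa using sA 0 0 (by norm_num)
    · simpa using sB 0 0 (by norm_num)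
  | succ n ih =>
    intro k hk
    rcases lt_or_ge k (2 ^ n) with hkn | hkn
    · have e0 := (ih k hkn).1
      have e1 := (ih k hkn).2
      have f0 := sA n k hkn
      have f1 := sA (n + 1) (2 * k) (by omega)
      have f2 := sA (n + 1) (2 * k + 1) (by omega)
      constructor
      · rw [f1, e0, f0]; try ring
      · rw [f2, e1, f0]; try ring
    · obtain ⟨m, rfl⟩ := Nat.exists_eq_add_of_le hkn
      have hm : m < 2 ^ n := by
        have : 2 ^ (n+1) = 2 ^ n + 2 ^ n := by ring
        omega
      have e0 := (ih m hm).1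
      have e1 := (ih m hm).2
      have f0 := sB n m hm
      have f1 : dl L (n + 2) (2 * (2 ^ n + m)) = (1 - α) * dl L (n + 1) (2 * m) := by
        have := sB (n + 1) (2 * m) (by omega)
        rwa [show 2 ^ (n+1) + 2 * m = 2 * (2 ^ n + m) by ring] at this
      have f2 : dl L (n + 2) (2 * (2 ^ n + m) + 1) = (1 - α) * dl L (n + 1) (2 * m + 1) := by
        have := sB (n + 1) (2 * m + 1) (by omega)
        rwa [show 2 ^ (n+1) + (2 * m + 1) = 2 * (2 ^ n + m) + 1 by ring] at this
      constructor
      · rw [f1, e0, f0]; try ring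
      · rw [f2, e1, f0]; try ring

theorem dl_pos {α : ℝ} {L : ℝ → ℝ} (h0 : 0 < α) (h1 : α < 1)
    (hL0 : L 0 = 0) (hL1 : L 1 = 1)
    (hchild : ∀ n k, k < 2 ^ n →
      dl L (n + 1) (2 * k) = α * dl L n k ∧ dl L (n + 1) (2 * k + 1) = (1 - α) * dl L n k) :
    ∀ n k, k < 2 ^ n → 0 < dl L n k := by
  intro n
  induction n with
  | zero =>
    intro k hk
    interval_cases k
    simp [dl, hL0, hL1]
  | succ n ih =>
    intro k hk
    rcases Nat.even_or_odd k with ⟨m, rfl⟩ | ⟨m, rfl⟩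
    · have hm : m < 2 ^ n := by omega
      have := (hchild n m hm).1
      rw [show m + m = 2 * m by ring] at *
      rw [this]
      exact mul_pos h0 (ih m hm)
    · have hm : m < 2 ^ n := by
        have : 2 ^ (n+1) = 2 ^ n + 2 ^ n := by ring
        omega
      have := (hchild n m hm).2
      rw [this]
      exact mul_pos (by linarith) (ih m hm)

theorem mono_dyadic {L : ℝ → ℝ} {α : ℝ} (h0 : 0 < α) (h1 : α < 1)
    (hL0 : L 0 = 0) (hL1 : L 1 = 1)
    (hchild : ∀ n k, k < 2 ^ n →
      dl L (n + 1) (2 * k) = α * dl L n k ∧ dl L (n + 1) (2 * k + 1) = (1 - α) * dl L n k) :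
    ∀ (n j k : ℕ), j ≤ k → k ≤ 2 ^ n → L ((j : ℝ) / 2 ^ n) ≤ L ((k : ℝ) / 2 ^ n) := by
  have hpos := dl_pos h0 h1 hL0 hL1 hchild
  intro n j k hjk
  induction k, hjk using Nat.le_induction with
  | base => intro _; exact le_rfl
  | succ k hk ih =>
    intro hk2
    have h1' : L ((j : ℝ) / 2 ^ n) ≤ L ((k : ℝ) / 2 ^ n) := ih (by omega)
    have h2' : 0 < dl L n k := hpos n k (by omega)
    have : L ((k : ℝ) / 2 ^ n) ≤ L (((k : ℝ) + 1) / 2 ^ n) := by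
      simp only [dl] at h2'; linarith
    push_cast
    linarith

end SalemAux

open SalemAux

/-- Salem's singular function has derivative zero Lebesgue-almost everywhere
on [0,1]. -/
theorem salem_deriv_zero_ae (α : ℝ) (h0 : 0 < α) (h1 : α < 1) (hne : α ≠ 1/2)
    (L : ℝ → ℝ)
    (hcont : ContinuousOn L (Set.Icc 0 1))
    (heq1 : ∀ x ∈ Set.Ico (0:ℝ) (1/2), L x = α * L (2*x))
    (heq2 : ∀ x ∈ Set.Icc (1/2:ℝ) 1, L x = (1-α) * L (2*x - 1) + α) :
    ∀ᵐ x ∂(volume.restrict (Set.Icc (0:ℝ) 1)), HasDerivAt L 0 x := by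
  -- basic values
  have hL0 : L 0 = 0 := by
    have h := heq1 0 ⟨le_rfl, by norm_num⟩
    norm_num at h
    have h2 : (1 - α) * L 0 = 0 := by linear_combination h
    rcases mul_eq_zero.1 h2 with h3 | h3
    · exfalso; linarith
    · exact h3
  have hL1 : L 1 = 1 := by
    have h := heq2 1 ⟨by norm_num, le_rfl⟩
    norm_num at h
    have h2 : α * L 1 = α * 1 := by linear_combination h
    exact mul_left_cancel₀ (ne_of_gt h0) h2
  have hhalf : L (1/2) = α := by
    have h := heq2 (1/2) ⟨le_rfl, by norm_num⟩
    norm_num at h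
    rw [hL0] at h
    linarith
  -- scaled relations for dyadic points
  have hA : ∀ (n j : ℕ), j ≤ 2 ^ n → L ((j : ℝ) / 2 ^ (n + 1)) = α * L ((j : ℝ) / 2 ^ n) := by
    intro n j hj
    have hj' : (j : ℝ) ≤ 2 ^ n := by exact_mod_cast hj
    have h2n : (0:ℝ) < 2 ^ n := by positivity
    rcases lt_or_eq_of_le hj' with hlt | heqj
    · have hmem : (j : ℝ) / 2 ^ (n + 1) ∈ Set.Ico (0:ℝ) (1/2) := by
        constructor
        · positivity
        · rw [div_lt_iff₀ (by positivity)]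
          rw [show (2:ℝ) ^ (n+1) = 2 ^ n * 2 by ring]
          linarith
      have h := heq1 _ hmem
      rw [h]
      congr 1
      field_simp
      ring
    · have hj2 : (j : ℝ) / 2 ^ (n + 1) = 1/2 := by
        rw [heqj, pow_succ, div_eq_div_iff (by positivity) (by norm_num)]; ring
      have hj3 : (j : ℝ) / 2 ^ n = 1 := by
        rw [heqj]; field_simp
      rw [hj2, hj3, hhalf, hL1]; ring
  have hB : ∀ (n m : ℕ), m ≤ 2 ^ n →
      L (((2 : ℝ) ^ n + (m : ℝ)) / 2 ^ (n + 1)) = (1 - α) * L ((m : ℝ) / 2 ^ n) + α := by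
    intro n m hm
    have hm' : (m : ℝ) ≤ 2 ^ n := by exact_mod_cast hm
    have h2n : (0:ℝ) < 2 ^ n := by positivity
    have hmem : ((2 : ℝ) ^ n + (m : ℝ)) / 2 ^ (n + 1) ∈ Set.Icc (1/2:ℝ) 1 := by
      constructor
      · rw [le_div_iff₀ (by positivity)]
        have : (0:ℝ) ≤ (m:ℝ) := Nat.cast_nonneg m
        rw [show (2:ℝ) ^ (n+1) = 2 ^ n * 2 by ring]
        linarith
      · rw [div_le_one (by positivity)]
        rw [show (2:ℝ) ^ (n+1) = 2 ^ n * 2 by ring]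
        linarith
    have h := heq2 _ hmem
    rw [h]
    congr 2
    field_simp
    ring
  have hchild := child hA hB
  have hpos := dl_pos h0 h1 hL0 hL1 hchild
  have hmd := mono_dyadic h0 h1 hL0 hL1 hchild
  -- monotonicity of L on [0,1]
  have hmono : MonotoneOn L (Set.Icc 0 1) := by
    intro x hx y hy hxy
    rcases eq_or_lt_of_le hxy with rfl | hlt
    · exact le_rfl
    set u : ℕ → ℝ := fun n => (⌈x * 2 ^ n⌉₊ : ℝ) / 2 ^ n with hu
    set v : ℕ → ℝ := fun n => (⌊y * 2 ^ n⌋₊ : ℝ) / 2 ^ n with hv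
    have hx0 : (0:ℝ) ≤ x := hx.1
    have hy0 : (0:ℝ) ≤ y := hy.1
    have hupper : ∀ n, (⌈x * 2 ^ n⌉₊ : ℕ) ≤ 2 ^ n := by
      intro n
      rw [Nat.ceil_le]
      push_cast
      calc x * 2 ^ n ≤ 1 * 2 ^ n := by
            have : (0:ℝ) < 2 ^ n := by positivity
            nlinarith [hx.2]
        _ = 2 ^ n := by ring
    have hvupper : ∀ n, (⌊y * 2 ^ n⌋₊ : ℕ) ≤ 2 ^ n := by
      intro n
      have : (⌊y * 2 ^ n⌋₊ : ℝ) ≤ y * 2 ^ n := Nat.floor_le (by positivity)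
      have h2 : y * 2 ^ n ≤ 2 ^ n := by nlinarith [hy.2, (show (0:ℝ) < 2 ^ n by positivity)]
      exact_mod_cast this.trans h2
    have humem : ∀ n, u n ∈ Set.Icc (0:ℝ) 1 := by
      intro n
      constructor
      · positivity
      · rw [div_le_one (by positivity)]
        exact_mod_cast hupper n
    have hvmem : ∀ n, v n ∈ Set.Icc (0:ℝ) 1 := by
      intro n
      constructor
      · positivity
      · rw [div_le_one (by positivity)]
        exact_mod_cast hvupper n
    have hhalfpow : Filter.Tendsto (fun n : ℕ => (1/2:ℝ) ^ n) Filter.atTop (nhds 0) :=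
      tendsto_pow_atTop_nhds_zero_of_lt_one (by norm_num) (by norm_num)
    have hutend : Filter.Tendsto u Filter.atTop (nhds x) := by
      have hle : ∀ n, x ≤ u n := by
        intro n
        rw [le_div_iff₀ (by positivity)]
        exact Nat.le_ceil _
      have hge : ∀ n, u n ≤ x + (1/2) ^ n := by
        intro n
        rw [div_le_iff₀ (by positivity)]
        have := Nat.ceil_lt_add_one (show (0:ℝ) ≤ x * 2 ^ n by positivity)
        have h2 : (x + (1/2) ^ n) * 2 ^ n = x * 2 ^ n + 1 := by
          rw [show ((1:ℝ)/2) ^ n = 1 / 2 ^ n by rw [div_pow]; norm_num]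
          field_simp
        linarith
      have : Filter.Tendsto (fun n : ℕ => x + (1/2:ℝ) ^ n) Filter.atTop (nhds x) := by
        simpa using tendsto_const_nhds.add hhalfpow
      exact tendsto_of_tendsto_of_tendsto_of_le_of_le tendsto_const_nhds this hle hge
    have hvtend : Filter.Tendsto v Filter.atTop (nhds y) := by
      have hle : ∀ n, y - (1/2) ^ n ≤ v n := by
        intro n
        rw [sub_le_iff_le_add, hv]
        have h2 := Nat.lt_floor_add_one (y * 2 ^ n)
        rw [show (⌊y * 2 ^ n⌋₊ : ℝ) / 2 ^ n + (1/2) ^ n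
            = ((⌊y * 2 ^ n⌋₊ : ℝ) + 1) / 2 ^ n by
          rw [show ((1:ℝ)/2) ^ n = 1 / 2 ^ n by rw [div_pow]; norm_num]; ring]
        rw [le_div_iff₀ (by positivity)]
        linarith
      have hge : ∀ n, v n ≤ y := by
        intro n
        rw [div_le_iff₀ (by positivity)]
        exact Nat.floor_le (by positivity)
      have : Filter.Tendsto (fun n : ℕ => y - (1/2:ℝ) ^ n) Filter.atTop (nhds y) := by
        simpa using tendsto_const_nhds.sub hhalfpow
      exact tendsto_of_tendsto_of_tendsto_of_le_of_le this tendsto_const_nhds hle hge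
    have hLu : Filter.Tendsto (fun n => L (u n)) Filter.atTop (nhds (L x)) := by
      apply (hcont x hx).tendsto.comp
      rw [tendsto_nhdsWithin_iff]
      exact ⟨hutend, Filter.Eventually.of_forall humem⟩
    have hLv : Filter.Tendsto (fun n => L (v n)) Filter.atTop (nhds (L y)) := by
      apply (hcont y hy).tendsto.comp
      rw [tendsto_nhdsWithin_iff]
      exact ⟨hvtend, Filter.Eventually.of_forall hvmem⟩
    have hev : ∀ᶠ n in Filter.atTop, L (u n) ≤ L (v n) := by
      have h2top : Filter.Tendsto (fun n : ℕ => (2:ℝ) ^ n * (y - x)) Filter.atTop Filter.atTop :=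
        (tendsto_pow_atTop_atTop_of_one_lt (by norm_num : (1:ℝ) < 2)).atTop_mul_const
          (by linarith)
      filter_upwards [h2top.eventually_ge_atTop 1] with n hn
      have hceil : (⌈x * 2 ^ n⌉₊ : ℕ) ≤ ⌊y * 2 ^ n⌋₊ := by
        apply Nat.le_floor
        have := Nat.ceil_lt_add_one (show (0:ℝ) ≤ x * 2 ^ n by positivity)
        push_cast
        nlinarith
      exact hmd n _ _ hceil (hvupper n)
    exact le_of_tendsto_of_tendsto hLu hLv hev
  -- extend to a monotone function on ℝ
  set g : ℝ → ℝ := fun y => L (max 0 (min 1 y)) with hg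
  have hclamp : ∀ y : ℝ, max 0 (min 1 y) ∈ Set.Icc (0:ℝ) 1 :=
    fun y => ⟨le_max_left _ _, max_le (by norm_num) (min_le_left _ _)⟩
  have hgmono : Monotone g := by
    intro a b hab
    exact hmono (hclamp a) (hclamp b)
      (max_le_max le_rfl (min_le_min le_rfl hab))
  have hgL : ∀ y ∈ Set.Icc (0:ℝ) 1, g y = L y := by
    intro y hy
    simp only [hg]
    rw [min_eq_right hy.2, max_eq_right hy.1]
  rw [ae_restrict_iff' measurableSet_Icc]
  have hout : ∀ᵐ x : ℝ ∂volume, x ∉ ({0, 1} : Set ℝ) := by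
    rw [← measure_eq_zero_iff_ae_notMem]
    exact Set.Countable.measure_zero (((Set.finite_singleton (1:ℝ)).insert 0).countable) _
  filter_upwards [hgmono.ae_differentiableAt, hout] with x hdiff hx01 hxIcc
  have hx0 : 0 < x := by
    rcases eq_or_lt_of_le hxIcc.1 with h | h
    · exact absurd (by simp [← h]) hx01
    · exact h
  have hx1 : x < 1 := by
    rcases eq_or_lt_of_le hxIcc.2 with h | h
    · exact absurd (by simp [h]) hx01
    · exact h
  set c := deriv g x with hc
  have hgx : HasDerivAt g c x := hdiff.hasDerivAt
  -- dyadic ratios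
  set a : ℕ → ℕ := fun n => ⌊x * 2 ^ n⌋₊ with ha
  set r : ℕ → ℝ := fun n => 2 ^ n * dl L n (a n) with hr
  have halt : ∀ n, a n < 2 ^ n := by
    intro n
    rw [ha]
    rw [Nat.floor_lt (by positivity)]
    push_cast
    nlinarith [(show (0:ℝ) < 2 ^ n by positivity)]
  have hple : ∀ n, (a n : ℝ) / 2 ^ n ≤ x := by
    intro n
    rw [div_le_iff₀ (by positivity)]
    exact Nat.floor_le (by positivity)
  have hqgt : ∀ n, x < ((a n : ℝ) + 1) / 2 ^ n := by
    intro n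
    rw [lt_div_iff₀ (by positivity)]
    exact Nat.lt_floor_add_one _
  have hrpos : ∀ n, 0 < r n := by
    intro n
    exact mul_pos (by positivity) (hpos n (a n) (halt n))
  -- r n tends to c
  have hrc : Filter.Tendsto r Filter.atTop (nhds c) := by
    rw [Metric.tendsto_atTop]
    intro ε hε
    have hlo := (hasDerivAt_iff_isLittleO.1 hgx).def (show (0:ℝ) < ε/4 by linarith)
    rw [Metric.eventually_nhds_iff] at hlo
    obtain ⟨δ, hδ, hball⟩ := hlo
    obtain ⟨N, hN⟩ : ∃ N : ℕ, (1/2:ℝ) ^ N < δ :=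
      exists_pow_lt_of_lt_one hδ (by norm_num)
    refine ⟨N, fun n hn => ?_⟩
    set p : ℝ := (a n : ℝ) / 2 ^ n with hp
    set q : ℝ := ((a n : ℝ) + 1) / 2 ^ n with hq
    have hqp : q - p = (1/2) ^ n := by
      rw [hp, hq, show ((1:ℝ)/2) ^ n = 1 / 2 ^ n by rw [div_pow]; norm_num]
      field_simp
      ring
    have hpow_le : ((1:ℝ)/2) ^ n ≤ (1/2) ^ N :=
      pow_le_pow_of_le_one (by norm_num) (by norm_num) hn
    have hpow_pos : (0:ℝ) < (1/2) ^ n := by positivity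
    have hp01 : p ∈ Set.Icc (0:ℝ) 1 := by
      constructor
      · positivity
      · rw [hp, div_le_one (by positivity)]
        have := halt n
        have : (a n : ℝ) ≤ 2 ^ n := by exact_mod_cast this.le
        linarith
    have hq01 : q ∈ Set.Icc (0:ℝ) 1 := by
      constructor
      · positivity
      · rw [hq, div_le_one (by positivity)]
        have := halt n
        have h2 : (a n : ℝ) + 1 ≤ 2 ^ n := by exact_mod_cast this
        linarith
    have hdistp : dist p x < δ := by
      rw [Real.dist_eq, abs_of_nonpos (by linarith [hple n])]
      have : x - p ≤ q - p := by linarith [hqgt n]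
      rw [hqp] at this
      linarith
    have hdistq : dist q x < δ := by
      rw [Real.dist_eq, abs_of_nonneg (by linarith [hqgt n])]
      have : q - x ≤ q - p := by linarith [hple n]
      rw [hqp] at this
      linarith
    have eq1 : |g q - g x - (q - x) * c| ≤ ε/4 * |q - x| := by
      have := hball hdistq
      simpa [Real.norm_eq_abs, smul_eq_mul] using this
    have eq2 : |g p - g x - (p - x) * c| ≤ ε/4 * |p - x| := by
      have := hball hdistp
      simpa [Real.norm_eq_abs, smul_eq_mul] using this
    have habsq : |q - x| ≤ (1/2) ^ n := by
      rw [abs_of_nonneg (by linarith [hqgt n])]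
      linarith [hple n, hqp]
    have habsp : |p - x| ≤ (1/2) ^ n := by
      rw [abs_of_nonpos (by linarith [hple n])]
      linarith [hqgt n, hqp]
    have hgq : g q = L q := hgL q hq01
    have hgp : g p = L p := hgL p hp01
    have hrn : r n = 2 ^ n * (g q - g p) := by
      rw [hgq, hgp, hr]
      rfl
    have h2n1 : (2:ℝ) ^ n * (q - p) = 1 := by
      rw [hqp, ← mul_pow]
      norm_num
    clear_value p q
    have key : r n - c = 2 ^ n * ((g q - g x - (q - x) * c) - (g p - g x - (p - x) * c)) := by
      rw [hrn]
      linear_combination c * h2n1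
    rw [Real.dist_eq, key, abs_mul, abs_of_pos (show (0:ℝ) < 2 ^ n by positivity)]
    have hbound : |(g q - g x - (q - x) * c) - (g p - g x - (p - x) * c)|
        ≤ ε/4 * (1/2) ^ n + ε/4 * (1/2) ^ n := by
      calc |(g q - g x - (q - x) * c) - (g p - g x - (p - x) * c)|
          ≤ |g q - g x - (q - x) * c| + |g p - g x - (p - x) * c| := abs_sub _ _
        _ ≤ ε/4 * |q - x| + ε/4 * |p - x| := add_le_add eq1 eq2
        _ ≤ ε/4 * (1/2) ^ n + ε/4 * (1/2) ^ n := by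
            apply add_le_add <;> apply mul_le_mul_of_nonneg_left _ (by linarith)
            · exact habsq
            · exact habsp
    have h2half : (2:ℝ) ^ n * ((1/2) ^ n) = 1 := by
      rw [← mul_pow]; norm_num
    calc (2:ℝ) ^ n * |(g q - g x - (q - x) * c) - (g p - g x - (p - x) * c)|
        ≤ 2 ^ n * (ε/4 * (1/2) ^ n + ε/4 * (1/2) ^ n) := by
          apply mul_le_mul_of_nonneg_left hbound (by positivity)
      _ = ε/2 := by
          rw [show (2:ℝ) ^ n * (ε/4 * (1/2) ^ n + ε/4 * (1/2) ^ n)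
            = (2 ^ n * (1/2) ^ n) * (ε/2) by ring, h2half]; ring
      _ < ε := by linarith
  -- consecutive ratio relation
  have heqr : ∀ n, |r (n + 1) - r n| = |2 * α - 1| * r n := by
    intro n
    have hm1 : 2 * a n ≤ a (n + 1) := by
      apply Nat.le_floor
      have := Nat.floor_le (show (0:ℝ) ≤ x * 2 ^ n by positivity)
      push_cast
      rw [pow_succ]
      nlinarith
    have hm2 : a (n + 1) < 2 * a n + 2 := by
      rw [ha]
      rw [Nat.floor_lt (by positivity)]
      have := Nat.lt_floor_add_one (x * 2 ^ n)
      push_cast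
      rw [pow_succ]
      nlinarith
    have hcase : a (n + 1) = 2 * a n ∨ a (n + 1) = 2 * a n + 1 := by omega
    rcases hcase with hcasee | hcasee
    · have h2 : r (n + 1) = 2 * α * r n := by
        rw [hr]
        simp only
        rw [hcasee, (hchild n (a n) (halt n)).1]
        ring
      rw [h2, show 2 * α * r n - r n = (2 * α - 1) * r n by ring, abs_mul,
        abs_of_pos (hrpos n)]
    · have h2 : r (n + 1) = 2 * (1 - α) * r n := by
        rw [hr]
        simp only
        rw [hcasee, (hchild n (a n) (halt n)).2]
        ring
      rw [h2, show 2 * (1 - α) * r n - r n = (1 - 2 * α) * r n by ring, abs_mul,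
        abs_of_pos (hrpos n), abs_sub_comm 1 (2 * α)]
  have hd0 : Filter.Tendsto (fun n => |r (n + 1) - r n|) Filter.atTop (nhds 0) := by
    have h1' : Filter.Tendsto (fun n => r (n + 1)) Filter.atTop (nhds c) :=
      hrc.comp (Filter.tendsto_add_atTop_nat 1)
    simpa using (h1'.sub hrc).abs
  have hd1 : Filter.Tendsto (fun n => |2 * α - 1| * r n) Filter.atTop
      (nhds (|2 * α - 1| * c)) := hrc.const_mul _
  have hc0 : |2 * α - 1| * c = 0 :=
    tendsto_nhds_unique (hd0.congr fun n => heqr n) hd1 |>.symm ▸ rfl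
  have hcz : c = 0 := by
    have hne' : |2 * α - 1| ≠ 0 := by
      rw [abs_ne_zero]
      intro h
      apply hne
      linarith
    exact (mul_eq_zero.1 hc0).resolve_left hne'
  have : HasDerivAt g 0 x := hcz ▸ hgx
  apply this.congr_of_eventuallyEq
  filter_upwards [Ioo_mem_nhds hx0 hx1] with y hy
  exact (hgL y ⟨hy.1.le, hy.2.le⟩).symm
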